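/- There exists a positive constant K such that for every real c with 0 < |c| < √2 and every x ∈ ℝ one has |η_c(x)| + |η_c′(x)| + |c|·|v_c(x)| ≤ K·(2−c²)·exp(−√(2−c²)·|x|). -/

import Mathlib

private lemma eta_hasDerivAt (A s x : ℝ) :
    HasDerivAt (fun y => A / (2 * (Real.cosh (s * y / 2)) ^ 2))
      (-(A * s) * Real.sinh (s * x / 2) / (2 * (Real.cosh (s * x / 2)) ^ 3)) x := by
  have hC : (0:ℝ) < Real.cosh (s * x / 2) := Real.cosh_pos _
  have h1 : HasDerivAt (fun y : ℝ => s * y / 2) (s / 2) x := by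
    simpa using ((hasDerivAt_id x).const_mul s).div_const 2
  have h2 : HasDerivAt (fun y => Real.cosh (s * y / 2))
      (Real.sinh (s * x / 2) * (s / 2)) x :=
    by have := (Real.hasDerivAt_cosh (s * x / 2)).comp x h1; exact this
  have h3 : HasDerivAt (fun y => 2 * (Real.cosh (s * y / 2)) ^ 2)
      (2 * ((2:ℕ) * Real.cosh (s * x / 2) ^ 1 * (Real.sinh (s * x / 2) * (s / 2)))) x :=
    (h2.pow 2).const_mul 2
  have hne : 2 * (Real.cosh (s * x / 2)) ^ 2 ≠ 0 := by positivity
  have h4 := (hasDerivAt_const x A).div h3 hne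
  refine HasDerivAt.congr_deriv h4 ?_
  rw [div_eq_div_iff (by positivity) (by positivity)]
  push_cast
  ring

set_option maxHeartbeats 1000000 in
/-- Uniform exponential decay of the solitons:
`|η_c(x)| + |η_c'(x)| + |c| |v_c(x)| ≤ K (2-c²) exp(-√(2-c²) |x|)`. -/
theorem soliton_exponential_decay
    (η v : ℝ → ℝ → ℝ)
    (hη : ∀ c x : ℝ, η c x =
      (2 - c ^ 2) / (2 * (Real.cosh (Real.sqrt (2 - c ^ 2) * x / 2)) ^ 2))
    (hv : ∀ c x : ℝ, v c x = -c * η c x / (2 * (1 - η c x))) :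
    ∃ K : ℝ, 0 < K ∧ ∀ c : ℝ, c ≠ 0 → |c| < Real.sqrt 2 → ∀ x : ℝ,
      |η c x| + |deriv (η c) x| + |c| * |v c x|
        ≤ K * (2 - c ^ 2) * Real.exp (-(Real.sqrt (2 - c ^ 2)) * |x|) := by
  refine ⟨8, by norm_num, ?_⟩
  intro c hc0 hc x
  set s := Real.sqrt (2 - c ^ 2) with hs_def
  have hsq2 : Real.sqrt 2 ^ 2 = 2 := Real.sq_sqrt (by norm_num)
  have hc2 : c ^ 2 < 2 := by nlinarith [abs_nonneg c, sq_abs c, Real.sqrt_nonneg 2]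
  have hA : 0 < 2 - c ^ 2 := by linarith
  have hs2 : s ^ 2 = 2 - c ^ 2 := Real.sq_sqrt hA.le
  have hs0 : 0 < s := Real.sqrt_pos.mpr hA
  have hs15 : s ≤ 1.5 := by nlinarith
  set t := s * x / 2 with ht_def
  set C := Real.cosh t with hC_def
  have hC1 : 1 ≤ C := Real.one_le_cosh t
  have hC0 : 0 < C := lt_of_lt_of_le one_pos hC1
  have hcosh := Real.cosh_eq t
  have habs : |t| = s * |x| / 2 := by
    rw [ht_def, abs_div, abs_mul, abs_of_pos hs0, abs_two]
  set E := Real.exp (-(s * |x|)) with hE_def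
  have hEpos : 0 < E := Real.exp_pos _
  have hexp : Real.exp |t| ≤ 2 * C := by
    rcases le_or_gt 0 t with h | h
    · rw [abs_of_nonneg h, hC_def, hcosh]
      nlinarith [Real.exp_pos (-t)]
    · rw [abs_of_neg h, hC_def, hcosh]
      nlinarith [Real.exp_pos t]
  have hsum : s * |x| = |t| + |t| := by rw [habs]; ring
  have h2 : Real.exp (s * |x|) ≤ 4 * C ^ 2 := by
    rw [hsum, Real.exp_add]
    nlinarith [Real.exp_pos |t|]
  have hprod : Real.exp (s * |x|) * E = 1 := by
    rw [hE_def, ← Real.exp_add]; simp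
  have hE1 : 1 ≤ 4 * C ^ 2 * E := by
    nlinarith [mul_le_mul_of_nonneg_right h2 hEpos.le]
  -- η facts
  have hηx : η c x = (2 - c ^ 2) / (2 * C ^ 2) := hη c x
  have hη_nonneg : 0 ≤ η c x := by rw [hηx]; positivity
  have hη_le : η c x ≤ 2 * (2 - c ^ 2) * E := by
    rw [hηx, div_le_iff₀ (by positivity)]
    nlinarith [mul_le_mul_of_nonneg_left hE1 hA.le]
  have hη_half : η c x ≤ (2 - c ^ 2) / 2 := by
    rw [hηx, div_le_div_iff₀ (by positivity) (by norm_num)]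
    nlinarith [mul_nonneg hA.le (show (0:ℝ) ≤ C ^ 2 - 1 by nlinarith)]
  have hc2pos : 0 < c ^ 2 := by positivity
  have hden : c ^ 2 / 2 ≤ 1 - η c x := by linarith
  have hdenpos : 0 < 1 - η c x := by linarith
  -- v bound
  have hv_le : |c| * |v c x| ≤ η c x := by
    have h2d : (0:ℝ) < 2 * (1 - η c x) := by linarith
    rw [hv c x, abs_div, abs_of_pos h2d, abs_mul, abs_neg, abs_of_nonneg hη_nonneg]
    have heq : |c| * (|c| * η c x / (2 * (1 - η c x)))
        = c ^ 2 * η c x / (2 * (1 - η c x)) := by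
      rw [← sq_abs]; ring
    rw [heq, div_le_iff₀ h2d]
    nlinarith [mul_le_mul_of_nonneg_right
      (show c ^ 2 ≤ 2 * (1 - η c x) by linarith) hη_nonneg]
  -- derivative
  have hfun : η c = fun y => (2 - c ^ 2) / (2 * (Real.cosh (s * y / 2)) ^ 2) :=
    funext (hη c)
  have hderiv : deriv (η c) x
      = -((2 - c ^ 2) * s) * Real.sinh t / (2 * C ^ 3) := by
    rw [hfun]
    exact (eta_hasDerivAt (2 - c ^ 2) s x).deriv
  have hsinh : |Real.sinh t| ≤ C := by
    have h1 := Real.sinh_lt_cosh t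
    have h2 := Real.sinh_lt_cosh (-t)
    rw [Real.sinh_neg, Real.cosh_neg] at h2
    rw [abs_le]; constructor <;> [linarith; linarith]
  have hd_le : |deriv (η c) x| ≤ 3 * (2 - c ^ 2) * E := by
    rw [hderiv, abs_div, abs_mul, abs_neg,
      abs_of_nonneg (mul_nonneg hA.le hs0.le),
      abs_of_pos (show (0:ℝ) < 2 * C ^ 3 by positivity)]
    rw [div_le_iff₀ (by positivity)]
    have step1 : (2 - c ^ 2) * s * |Real.sinh t| ≤ 1.5 * (2 - c ^ 2) * C := by
      have := mul_le_mul hs15 hsinh (abs_nonneg _) (by norm_num)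
      nlinarith [abs_nonneg (Real.sinh t)]
    have step2 : 1.5 * (2 - c ^ 2) * C ≤ 3 * (2 - c ^ 2) * E * (2 * C ^ 3) := by
      nlinarith [mul_le_mul_of_nonneg_left hE1
        (show (0:ℝ) ≤ 1.5 * (2 - c ^ 2) * C by positivity)]
    linarith
  have hEeq : Real.exp (-s * |x|) = E := by rw [hE_def, neg_mul]
  rw [abs_of_nonneg hη_nonneg, hEeq]
  nlinarith [hη_le, hd_le, hv_le, hEpos, hA]
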